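/- For any permutation τ ∈ S_{2k}, any n ≥ 1, and any n×n diagonal matrix D = diag(d_1,…,d_n) over ℂ: Σ_{r=(r_1,…,r_k) ∈ {1,…,n}^k} δ'_τ(r̃) · d_{r_1} d_{r_2} ⋯ d_{r_k} = Tr'_τ(D), where r̃ = (r_1, r_1, r_2, r_2, …, r_k, r_k). -/

import Mathlib

open MeasureTheory ProbabilityTheory Matrix
open scoped BigOperators ENNReal ComplexOrder

namespace WeingartenPaper

/-- Measurable space structure on matrices, inherited from the pi structure. -/
instance matrixMeasurableSpace {m n α : Type*} [MeasurableSpace α] :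
    MeasurableSpace (Matrix m n α) :=
  inferInstanceAs (MeasurableSpace (m → n → α))

/-! ### Symmetric-group notation (complex/unitary case) -/

/-- `κ(π)`: the number of cycles of `π`, i.e. the number of orbits of `π` on `{1,…,k}`
(fixed points included). -/
def kappa {k : ℕ} (π : Equiv.Perm (Fin k)) : ℕ :=
  π.cycleType.card + (k - π.cycleType.sum)

/-- `Tr_π(A) = ∏_j Tr(A^{μ_j})` where `(μ_1,…,μ_l)` is the cycle-type of `π`
(fixed points of `π` contribute a factor `Tr A`). -/
def permTrace {k n : ℕ} {R : Type*} [CommRing R]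
    (π : Equiv.Perm (Fin k)) (A : Matrix (Fin n) (Fin n) R) : R :=
  (π.cycleType.map fun m => (A ^ m).trace).prod * A.trace ^ (k - π.cycleType.sum)

/-- `δ_π(i,j) = ∏_{s} δ_{i_{π(s)}, j_s}`. -/
def permDelta {k n : ℕ} (π : Equiv.Perm (Fin k)) (i j : Fin k → Fin n) : ℂ :=
  ∏ s : Fin k, if i (π s) = j s then (1 : ℂ) else 0

/-- Convolution on `L(S_k)`: `(f*g)(π) = Σ_τ f(τ) g(τ⁻¹π)`. -/
noncomputable def conv {k : ℕ} (f g : Equiv.Perm (Fin k) → ℂ) :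
    Equiv.Perm (Fin k) → ℂ :=
  fun π => ∑ τ : Equiv.Perm (Fin k), f τ * g (τ⁻¹ * π)

/-- The function `π ↦ z^{κ(π)}` on `S_k`. -/
noncomputable def zk {k : ℕ} (z : ℂ) : Equiv.Perm (Fin k) → ℂ :=
  fun π => z ^ kappa π

/-- `w` is the unitary Weingarten function with parameter `z`: the unique central function
which is the pseudo-inverse of `z^{κ(·)}` under convolution. -/
def IsUnitaryWeingarten {k : ℕ} (z : ℂ) (w : Equiv.Perm (Fin k) → ℂ) : Prop :=
  (∀ σ π : Equiv.Perm (Fin k), w (σ * π * σ⁻¹) = w π) ∧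
  conv (conv (zk z) w) (zk z) = zk z ∧
  conv (conv w (zk z)) w = w

/-! ### Pair-partition notation (real/orthogonal case) -/

/-- The permutation `t_k = (1 2)(3 4)⋯(2k−1 2k)` of `{1,…,2k}` (0-indexed: swaps `2i ↔ 2i+1`). -/
def tPerm (k : ℕ) : Equiv.Perm (Fin (2 * k)) where
  toFun x := ⟨2 * (x.1 / 2) + (1 - x.1 % 2), by omega⟩
  invFun x := ⟨2 * (x.1 / 2) + (1 - x.1 % 2), by omega⟩
  left_inv x := by ext; simp; omega
  right_inv x := by ext; simp; omega

/-- The element `2s-1` (1-indexed), i.e. `2s` (0-indexed), of `{1,…,2k}`. -/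
def lo {k : ℕ} (s : Fin k) : Fin (2 * k) := ⟨2 * s.1, by omega⟩

/-- The element `2s` (1-indexed), i.e. `2s+1` (0-indexed), of `{1,…,2k}`. -/
def hi {k : ℕ} (s : Fin k) : Fin (2 * k) := ⟨2 * s.1 + 1, by omega⟩

/-- `σ ∈ S_{2k}` represents a pair partition in `M_{2k}`:
`σ(2i−1) < σ(2i)` for all `i` and `σ(1) < σ(3) < ⋯ < σ(2k−1)`. -/
def IsMatching {k : ℕ} (σ : Equiv.Perm (Fin (2 * k))) : Prop :=
  (∀ s : Fin k, σ (lo s) < σ (hi s)) ∧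
  ∀ s t : Fin k, s < t → σ (lo s) < σ (lo t)

instance {k : ℕ} : DecidablePred (IsMatching (k := k)) := fun σ => by
  unfold IsMatching; infer_instance

/-- `δ'_σ(i) = ∏_{s=1}^{k} δ_{i_{σ(2s−1)}, i_{σ(2s)}}`. -/
def delta' {k n : ℕ} (σ : Equiv.Perm (Fin (2 * k))) (i : Fin (2 * k) → Fin n) : ℂ :=
  ∏ s : Fin k, if i (σ (lo s)) = i (σ (hi s)) then (1 : ℂ) else 0

/-- The product `♯` on `L(S_{2k})`: `(f₁ ♯ f₂)(σ) = Σ_{τ ∈ M_{2k}} f₁(στ) f₂(τ⁻¹)`. -/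
noncomputable def sharp {k : ℕ} (f g : Equiv.Perm (Fin (2 * k)) → ℂ) :
    Equiv.Perm (Fin (2 * k)) → ℂ :=
  fun σ => ∑ τ : {τ : Equiv.Perm (Fin (2 * k)) // IsMatching τ}, f (σ * τ.1) * g (τ.1⁻¹)

/-- The edge relation of the graph `Γ(σ)`: `a ∼ b` if `{a,b}` is an edge `{2i−1,2i}`
(that is, `t_k a = b`) or an edge `{σ(2i−1),σ(2i)}` (that is, `(σ t_k σ⁻¹) a = b`). -/
def gammaRel (k : ℕ) (σ : Equiv.Perm (Fin (2 * k))) (a b : Fin (2 * k)) : Prop :=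
  tPerm k a = b ∨ (σ * tPerm k * σ⁻¹) a = b

/-- The setoid whose classes are the connected components of `Γ(σ)`. -/
def gammaSetoid (k : ℕ) (σ : Equiv.Perm (Fin (2 * k))) : Setoid (Fin (2 * k)) :=
  Relation.EqvGen.setoid (gammaRel k σ)

/-- `κ'(σ)`: the number of connected components of `Γ(σ)`. -/
noncomputable def kappa' {k : ℕ} (σ : Equiv.Perm (Fin (2 * k))) : ℕ :=
  Nat.card (Quotient (gammaSetoid k σ))

/-- `Tr'_σ(A) = ∏_j Tr(A^{μ_j})` where `(μ_1,…,μ_l)` is the coset-type of `σ`: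
each connected component of `Γ(σ)` with `2μ` vertices contributes a factor `Tr(A^μ)`. -/
noncomputable def trace' {k n : ℕ} {R : Type*} [CommRing R] (σ : Equiv.Perm (Fin (2 * k)))
    (A : Matrix (Fin n) (Fin n) R) : R :=
  ∏ᶠ c : Quotient (gammaSetoid k σ),
    (A ^ (Nat.card {x : Fin (2 * k) // Quotient.mk (gammaSetoid k σ) x = c} / 2)).trace

/-- `f` is `H_k`-biinvariant, where `H_k` is the centralizer of `t_k` in `S_{2k}`. -/
def IsHkBiinvariant {k : ℕ} (f : Equiv.Perm (Fin (2 * k)) → ℂ) : Prop :=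
  ∀ σ ζ : Equiv.Perm (Fin (2 * k)), ζ * tPerm k = tPerm k * ζ →
    f (ζ * σ) = f σ ∧ f (σ * ζ) = f σ

/-- The function `σ ↦ z^{κ'(σ)}` on `S_{2k}`. -/
noncomputable def zk' {k : ℕ} (z : ℂ) : Equiv.Perm (Fin (2 * k)) → ℂ :=
  fun σ => z ^ kappa' σ

/-- `w` is the orthogonal Weingarten function with parameter `z`: the unique
`H_k`-biinvariant function which is the pseudo-inverse of `z^{κ'(·)}` under `♯`. -/
def IsOrthogonalWeingarten {k : ℕ} (z : ℂ) (w : Equiv.Perm (Fin (2 * k)) → ℂ) : Prop :=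
  IsHkBiinvariant w ∧
  sharp (sharp (zk' z) w) (zk' z) = zk' z ∧
  sharp (sharp w (zk' z)) w = w

/-- `z_μ = ∏_i i^{m_i(μ)} m_i(μ)!` for a partition `μ`. -/
def zPart {k : ℕ} (μ : Nat.Partition k) : ℕ :=
  ∏ i ∈ μ.parts.toFinset, i ^ (μ.parts.count i) * (μ.parts.count i).factorial

end WeingartenPaper

namespace WeingartenPaper

lemma tPerm_lo {k : ℕ} (s : Fin k) : tPerm k (lo s) = hi s := by
  apply Fin.ext
  simp only [tPerm, lo, hi, Equiv.coe_fn_mk]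
  omega

lemma tPerm_hi {k : ℕ} (s : Fin k) : tPerm k (hi s) = lo s := by
  apply Fin.ext
  simp only [tPerm, lo, hi, Equiv.coe_fn_mk]
  omega

variable {k : ℕ} (τ : Equiv.Perm (Fin (2 * k)))

lemma mk_lo_eq_mk_hi (s : Fin k) :
    Quotient.mk (gammaSetoid k τ) (lo s) = Quotient.mk (gammaSetoid k τ) (hi s) :=
  Quotient.sound (Relation.EqvGen.rel _ _ (Or.inl (tPerm_lo s)))

lemma mk_tau_lo_eq_mk_tau_hi (s : Fin k) :
    Quotient.mk (gammaSetoid k τ) (τ (lo s)) = Quotient.mk (gammaSetoid k τ) (τ (hi s)) := by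
  refine Quotient.sound (Relation.EqvGen.rel _ _ (Or.inr ?_))
  simp [Equiv.Perm.mul_apply, tPerm_lo]

lemma lo_or_hi (x : Fin (2 * k)) : ∃ s : Fin k, x = lo s ∨ x = hi s := by
  refine ⟨⟨x.1 / 2, by have := x.isLt; omega⟩, ?_⟩
  have h2 : x.1 % 2 = 0 ∨ x.1 % 2 = 1 := by omega
  rcases h2 with h | h
  · left; apply Fin.ext; simp only [lo]; omega
  · right; apply Fin.ext; simp only [hi]; omega

lemma mk_lo_div (x : Fin (2 * k)) :
    Quotient.mk (gammaSetoid k τ) (lo ⟨x.1 / 2, by have := x.isLt; omega⟩)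
      = Quotient.mk (gammaSetoid k τ) x := by
  obtain ⟨s, h | h⟩ := lo_or_hi x
  · subst h
    have hs : (⟨(lo s).1 / 2, by have := (lo s).isLt; omega⟩ : Fin k) = s := by
      apply Fin.ext; simp only [lo]; omega
    rw [hs]
  · subst h
    have hs : (⟨(hi s).1 / 2, by have := (hi s).isLt; omega⟩ : Fin k) = s := by
      apply Fin.ext; simp only [hi]; omega
    rw [hs, mk_lo_eq_mk_hi]

lemma respects_of_cond {n : ℕ} (r : Fin k → Fin n)
    (hc : ∀ s : Fin k, r ⟨(τ (lo s)).1 / 2, by have := (τ (lo s)).isLt; omega⟩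
        = r ⟨(τ (hi s)).1 / 2, by have := (τ (hi s)).isLt; omega⟩)
    {a b : Fin (2 * k)} (h : Relation.EqvGen (gammaRel k τ) a b) :
    r ⟨a.1 / 2, by have := a.isLt; omega⟩ = r ⟨b.1 / 2, by have := b.isLt; omega⟩ := by
  have key : ∀ x : Fin (2 * k),
      r ⟨(τ x).1 / 2, by have := (τ x).isLt; omega⟩
        = r ⟨(τ (tPerm k x)).1 / 2, by have := (τ (tPerm k x)).isLt; omega⟩ := by
    intro x
    obtain ⟨s, hx | hx⟩ := lo_or_hi x
    · subst hx; simp only [tPerm_lo]; exact hc s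
    · subst hx; simp only [tPerm_hi]; exact (hc s).symm
  induction h with
  | rel a b hab =>
    rcases hab with h | h
    · subst h
      congr 1
      apply Fin.ext
      simp only [tPerm, Equiv.coe_fn_mk]
      omega
    · subst h
      have := key (τ⁻¹ a)
      simp only [Equiv.Perm.inv_def, Equiv.apply_symm_apply] at this
      simp only [Equiv.Perm.mul_apply]
      exact this
  | refl => rfl
  | symm _ _ _ ih => exact ih.symm
  | trans _ _ _ _ _ ih1 ih2 => exact ih1.trans ih2

/-- Equiv between `Fin k × Fin 2` and `Fin (2*k)`. -/
def pairEquiv (k : ℕ) : Fin k × Fin 2 ≃ Fin (2 * k) where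
  toFun p := ⟨2 * p.1.1 + p.2.1, by have := p.1.isLt; have := p.2.isLt; omega⟩
  invFun x := (⟨x.1 / 2, by have := x.isLt; omega⟩, ⟨x.1 % 2, by omega⟩)
  left_inv p := by
    obtain ⟨⟨s, hs⟩, ⟨j, hj⟩⟩ := p
    simp only [Prod.mk.injEq]
    constructor <;> (apply Fin.ext; simp; omega)
  right_inv x := by apply Fin.ext; simp; omega

end WeingartenPaper

open WeingartenPaper

/-- For `τ ∈ S_{2k}` and a diagonal matrix `D = diag(d₁,…,dₙ)`:
`Σ_r δ'_τ(r̃) d_{r₁}⋯d_{rₖ} = Tr'_τ(D)`, where `r̃ = (r₁,r₁,r₂,r₂,…,r_k,r_k)`. -/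
theorem sum_delta'_diagonal_eq_trace'
    {k n : ℕ} (hn : 1 ≤ n) (τ : Equiv.Perm (Fin (2 * k))) (d : Fin n → ℂ) :
    ∑ r : Fin k → Fin n,
        delta' τ (fun x : Fin (2 * k) => r ⟨x.1 / 2, by omega⟩) * ∏ s : Fin k, d (r s)
      = trace' τ (Matrix.diagonal d) := by
  classical
  letI : Fintype (Quotient (gammaSetoid k τ)) := Fintype.ofFinite _
  set Q := Quotient (gammaSetoid k τ) with hQ
  set mk : Fin (2 * k) → Q := Quotient.mk (gammaSetoid k τ) with hmk
  set cond : (Fin k → Fin n) → Prop := fun r => ∀ s : Fin k,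
      r ⟨(τ (lo s)).1 / 2, by have := (τ (lo s)).isLt; omega⟩ =
      r ⟨(τ (hi s)).1 / 2, by have := (τ (hi s)).isLt; omega⟩ with hcond
  set m : Q → ℕ := fun c => (Finset.univ.filter fun s : Fin k => mk (lo s) = c).card with hm
  calc ∑ r : Fin k → Fin n,
        delta' τ (fun x : Fin (2 * k) => r ⟨x.1 / 2, by omega⟩) * ∏ s : Fin k, d (r s)
      = ∑ r ∈ Finset.univ.filter cond, ∏ s : Fin k, d (r s) := by
        rw [Finset.sum_filter]
        refine Finset.sum_congr rfl fun r _ => ?_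
        by_cases h : cond r
        · rw [if_pos h]
          have hd : delta' τ (fun x : Fin (2 * k) => r ⟨x.1 / 2, by omega⟩) = 1 := by
            simp only [delta']
            refine Finset.prod_eq_one fun s _ => ?_
            exact if_pos (h s)
          rw [hd, one_mul]
        · rw [if_neg h]
          rw [hcond] at h
          obtain ⟨s, hs⟩ := not_forall.mp h
          have hd : delta' τ (fun x : Fin (2 * k) => r ⟨x.1 / 2, by omega⟩) = 0 := by
            simp only [delta']
            exact Finset.prod_eq_zero (Finset.mem_univ s) (if_neg hs)
          rw [hd, zero_mul]
    _ = ∑ f : Q → Fin n, ∏ s : Fin k, d (f (mk (lo s))) := by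
        symm
        refine Finset.sum_bij (i := fun f _ => fun s => f (mk (lo s))) ?_ ?_ ?_ ?_
        · intro f _
          rw [Finset.mem_filter]
          refine ⟨Finset.mem_univ _, fun s => ?_⟩
          show f (mk (lo ⟨(τ (lo s)).1 / 2, _⟩)) = f (mk (lo ⟨(τ (hi s)).1 / 2, _⟩))
          rw [hmk]
          rw [mk_lo_div τ (τ (lo s)), mk_lo_div τ (τ (hi s)), mk_tau_lo_eq_mk_tau_hi]
        · intro f _ g _ h
          funext c
          induction c using Quotient.inductionOn with
          | h x =>
            have := congrFun h ⟨x.1 / 2, by have := x.isLt; omega⟩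
            simpa only [hmk, mk_lo_div τ x] using this
        · intro r hr
          have hcr : cond r := (Finset.mem_filter.mp hr).2
          refine ⟨Quotient.lift (fun x : Fin (2 * k) => r ⟨x.1 / 2, by have := x.isLt; omega⟩)
            (fun a b hab => respects_of_cond τ r hcr hab), Finset.mem_univ _, ?_⟩
          funext s
          show r ⟨(lo s).1 / 2, _⟩ = r s
          congr 1
          apply Fin.ext
          simp only [lo]
          omega
        · intro f _
          rfl
    _ = ∑ f : Q → Fin n, ∏ c : Q, d (f c) ^ m c := by
        refine Finset.sum_congr rfl fun f _ => ?_
        rw [← Finset.prod_fiberwise Finset.univ (fun s : Fin k => mk (lo s))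
          (fun s => d (f (mk (lo s))))]
        refine Finset.prod_congr rfl fun c _ => ?_
        rw [Finset.prod_congr rfl (fun s hs => by rw [(Finset.mem_filter.mp hs).2]),
          Finset.prod_const]
    _ = ∏ c : Q, ∑ i : Fin n, d i ^ m c := by
        rw [← Finset.sum_prod_piFinset Finset.univ (fun c i => d i ^ m c)]
        rw [Fintype.piFinset_univ]
    _ = trace' τ (Matrix.diagonal d) := by
        rw [trace', finprod_eq_prod_of_fintype]
        refine Finset.prod_congr rfl fun c _ => ?_
        have hcard : Nat.card {x : Fin (2 * k) // Quotient.mk (gammaSetoid k τ) x = c}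
            = 2 * m c := by
          rw [Nat.card_eq_fintype_card, Fintype.card_subtype]
          rw [Finset.card_filter]
          rw [← Equiv.sum_comp (pairEquiv k)
            (fun x => if Quotient.mk (gammaSetoid k τ) x = c then 1 else 0)]
          rw [Fintype.sum_prod_type]
          have hstep : ∀ s : Fin k,
              (∑ j : Fin 2, if Quotient.mk (gammaSetoid k τ) (pairEquiv k (s, j)) = c
                then 1 else 0)
              = 2 * (if mk (lo s) = c then 1 else 0) := by
            intro s
            rw [Fin.sum_univ_two]
            have e0 : pairEquiv k (s, 0) = lo s := by apply Fin.ext; simp [pairEquiv, lo]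
            have e1 : pairEquiv k (s, 1) = hi s := by apply Fin.ext; simp [pairEquiv, hi]
            rw [e0, e1, ← mk_lo_eq_mk_hi]
            rw [hmk]
            split <;> omega
          rw [Finset.sum_congr rfl (fun s _ => hstep s), ← Finset.mul_sum]
          congr 1
          exact (Finset.card_filter _ _).symm
        rw [hcard, Nat.mul_div_cancel_left _ (by norm_num : (0:ℕ) < 2)]
        rw [Matrix.diagonal_pow, Matrix.trace_diagonal]
        refine Finset.sum_congr rfl fun i _ => ?_
        simp [Pi.pow_apply]
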